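/- Let f : ℝ → ℝ be strictly monotone and suppose there exists h ≥ 1 such that for all a ∈ ℝ and t > 0, h⁻¹ ≤ |f(a+t) − f(a)| / |f(a) − f(a−t)| ≤ h (the h-condition). Then f is unbounded above or below; in fact f(ℝ) cannot be contained in any bounded interval. -/
import Mathlib

private lemma aux_mono_unbounded (f : ℝ → ℝ) (hmono : StrictMono f)
    (h : ℝ) (hh : 1 ≤ h)
    (hcond : ∀ a t : ℝ, 0 < t →
      h⁻¹ ≤ |f (a + t) - f a| / |f a - f (a - t)|) :
    ∀ c d : ℝ, ¬ Set.range f ⊆ Set.Icc c d := by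
  intro c d hs
  have h0 : 0 < h := lt_of_lt_of_le one_pos hh
  have hinv : 0 < h⁻¹ := inv_pos.mpr h0
  have hf1 : 0 < f 1 - f 0 := sub_pos.mpr (hmono one_pos)
  -- key doubling estimate
  have key : ∀ n : ℕ, (1 + h⁻¹) ^ n * (f 1 - f 0) ≤ f (2 ^ n) - f 0 := by
    intro n
    induction n with
    | zero => simp
    | succ n ih =>
      set t : ℝ := 2 ^ n with ht
      have htpos : (0 : ℝ) < t := by positivity
      have h1 := hcond t t htpos
      have hA : 0 < f (t + t) - f t := sub_pos.mpr (hmono (by linarith))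
      have hB : 0 < f t - f (t - t) := by
        have : (0:ℝ) < t - (t - t) := by ring_nf; linarith
        exact sub_pos.mpr (hmono (by linarith))
      rw [abs_of_pos hA, abs_of_pos hB, le_div_iff₀ hB] at h1
      have hBeq : f t - f (t - t) = f t - f 0 := by norm_num
      rw [hBeq] at h1
      have hstep : (1 + h⁻¹) * (f t - f 0) ≤ f (t + t) - f 0 := by nlinarith
      have h2 : (2 : ℝ) ^ (n + 1) = t + t := by rw [ht]; ring
      rw [h2, pow_succ]
      have hmul : (1 + h⁻¹) ^ n * (1 + h⁻¹) * (f 1 - f 0)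
          = (1 + h⁻¹) * ((1 + h⁻¹) ^ n * (f 1 - f 0)) := by ring
      rw [hmul]
      calc (1 + h⁻¹) * ((1 + h⁻¹) ^ n * (f 1 - f 0))
          ≤ (1 + h⁻¹) * (f t - f 0) := by
            apply mul_le_mul_of_nonneg_left ih (by positivity)
        _ ≤ f (t + t) - f 0 := hstep
  -- pick n with (1+h⁻¹)^n * (f 1 - f 0) > d - c
  obtain ⟨n, hn⟩ := pow_unbounded_of_one_lt ((d - c) / (f 1 - f 0))
    (by linarith : (1:ℝ) < 1 + h⁻¹)
  have hn' : d - c < (1 + h⁻¹) ^ n * (f 1 - f 0) := by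
    rwa [div_lt_iff₀ hf1] at hn
  have hd : f (2 ^ n) ≤ d := (hs ⟨2 ^ n, rfl⟩).2
  have hc : c ≤ f 0 := (hs ⟨0, rfl⟩).1
  have := key n
  linarith

/-- A strictly monotone function on ℝ satisfying the `h`-condition (quasisymmetry on the line)
has image contained in no bounded interval. -/
theorem h_condition_unbounded (f : ℝ → ℝ)
    (hmono : StrictMono f ∨ StrictAnti f)
    (h : ℝ) (hh : 1 ≤ h)
    (hcond : ∀ a t : ℝ, 0 < t →
      h⁻¹ ≤ |f (a + t) - f a| / |f a - f (a - t)| ∧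
      |f (a + t) - f a| / |f a - f (a - t)| ≤ h) :
    ∀ c d : ℝ, ¬ Set.range f ⊆ Set.Icc c d := by
  rcases hmono with hm | hm
  · exact aux_mono_unbounded f hm h hh (fun a t ht => (hcond a t ht).1)
  · intro c d hs
    have hm' : StrictMono (fun x => -f x) := fun x y hxy => neg_lt_neg (hm hxy)
    have hcond' : ∀ a t : ℝ, 0 < t →
        h⁻¹ ≤ |(fun x => -f x) (a + t) - (fun x => -f x) a| /
          |(fun x => -f x) a - (fun x => -f x) (a - t)| := by
      intro a t ht
      have := (hcond a t ht).1
      have e1 : -f (a + t) + f a = -(f (a + t) - f a) := by ring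
      have e2 : -f a + f (a - t) = -(f a - f (a - t)) := by ring
      rw [show (fun x => -f x) (a + t) - (fun x => -f x) a = -(f (a + t) - f a) by ring, show (fun x => -f x) a - (fun x => -f x) (a - t) = -(f a - f (a - t)) by ring, abs_neg, abs_neg]; exact this
    apply aux_mono_unbounded (fun x => -f x) hm' h hh hcond' (-d) (-c)
    rintro y ⟨x, rfl⟩
    have := hs ⟨x, rfl⟩
    exact ⟨neg_le_neg this.2, neg_le_neg this.1⟩
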